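/- arXiv:1709.06891 — 8 statements merged into one kernel-verified Lean document; each statement's English description precedes it below -/
import Mathlib

section
/- For every n ∈ ℕ, an exponential polynomial f_n(x) = Σ_{i=0}^{n-1} P_i(x) e^{μ_i x}, with distinct real μ_i and deg P_i = k_i, has at most N_n - 1 real roots, where N_n = Σ_{i=0}^{n-1}(1 + k_i). -/
open Set Polynomial Real Finset



lemma rolle_encard {f : ℝ → ℝ} (hf : Differentiable ℝ f) :
    {x | f x = 0}.encard ≤ {x | deriv f x = 0}.encard + 1 := by
  by_cases hT : {x | deriv f x = 0}.Finite
  case neg =>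
    have : {x | deriv f x = 0}.encard = ⊤ := Set.Infinite.encard_eq hT
    rw [this]
    simp
  case pos =>
    set t := hT.toFinset with ht
    -- key claim: every finset inside zero set has card ≤ t.card + 1
    have key : ∀ F : Finset ℝ, ↑F ⊆ {x | f x = 0} → F.card ≤ t.card + 1 := by
      intro F hF
      by_contra hcon
      push_neg at hcon
      set k := F.card with hk
      have hk1 : 1 ≤ k := by omega
      have e := F.orderEmbOfFin hk.symm
      have hmem : ∀ j : Fin k, f (F.orderEmbOfFin hk.symm j) = 0 := by
        intro j
        exact hF (F.orderEmbOfFin_mem hk.symm j)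
      have hr : ∀ j : Fin (k-1), ∃ c ∈ Set.Ioo (F.orderEmbOfFin hk.symm (Fin.castLE (by omega) j))
          (F.orderEmbOfFin hk.symm ⟨j.val + 1, by omega⟩), deriv f c = 0 := by
        intro j
        apply exists_deriv_eq_zero
        · apply (F.orderEmbOfFin hk.symm).strictMono
          simp [Fin.lt_def]
        · exact hf.continuous.continuousOn
        · rw [hmem, hmem]
      choose c hc1 hc2 using hr
      have hci : Set.InjOn c ↑(Finset.univ : Finset (Fin (k-1))) := by
        have hmono : StrictMono c := by
          intro i j hij
          calc c i < F.orderEmbOfFin hk.symm ⟨i.val + 1, by omega⟩ := (hc1 i).2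
            _ ≤ F.orderEmbOfFin hk.symm (Fin.castLE (by omega) j) := by
                apply (F.orderEmbOfFin hk.symm).monotone
                simp [Fin.le_def]; omega
            _ < c j := (hc1 j).1
        exact (hmono.injective).injOn
      have := Finset.card_le_card_of_injOn c (fun j _ => by
        show c j ∈ t; rw [ht, Set.Finite.mem_toFinset]; exact hc2 j) hci
      rw [Finset.card_univ, Fintype.card_fin] at this
      omega
    -- zero set is finite
    have hSf : {x | f x = 0}.Finite := by
      by_contra hS
      obtain ⟨F, hF, hFc⟩ := Set.Infinite.exists_subset_card_eq hS (t.card + 2)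
      have := key F hF
      omega
    rw [Set.Finite.encard_eq_coe_toFinset_card hSf, Set.Finite.encard_eq_coe_toFinset_card hT]
    have := key hSf.toFinset (by simp)
    exact_mod_cast this



noncomputable def Dop (c : ℝ) (p : Polynomial ℝ) : Polynomial ℝ :=
  Polynomial.derivative p + Polynomial.C c * p

lemma Dop_zero (p : Polynomial ℝ) : Dop 0 p = Polynomial.derivative p := by
  simp [Dop]

lemma Dop_natDegree {c : ℝ} (hc : c ≠ 0) {p : Polynomial ℝ} (hp : p ≠ 0) :
    (Dop c p).natDegree = p.natDegree ∧ Dop c p ≠ 0 := by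
  have hco : (Dop c p).coeff p.natDegree = c * p.leadingCoeff := by
    rw [Dop, Polynomial.coeff_add, Polynomial.coeff_derivative,
      Polynomial.coeff_natDegree_succ_eq_zero, Polynomial.coeff_C_mul]
    simp only [Nat.cast_add, Nat.cast_one, zero_mul, zero_add, Polynomial.leadingCoeff]
  have hne : (Dop c p).coeff p.natDegree ≠ 0 := by
    rw [hco]
    exact mul_ne_zero hc (Polynomial.leadingCoeff_ne_zero.mpr hp)
  have h1 : (Dop c p).natDegree ≤ p.natDegree := by
    apply le_trans (Polynomial.natDegree_add_le _ _)
    simp only [sup_le_iff, max_le_iff]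
    exact ⟨le_trans (Polynomial.natDegree_derivative_le p) (Nat.sub_le _ _),
      Polynomial.natDegree_C_mul_le c p⟩
  refine ⟨le_antisymm h1 (Polynomial.le_natDegree_of_ne_zero hne), ?_⟩
  intro h
  rw [h] at hne
  simp at hne

lemma Dop_iter_natDegree {c : ℝ} (hc : c ≠ 0) {p : Polynomial ℝ} (hp : p ≠ 0) (d : ℕ) :
    ((Dop c)^[d] p).natDegree = p.natDegree ∧ (Dop c)^[d] p ≠ 0 := by
  induction d with
  | zero => exact ⟨rfl, hp⟩
  | succ d ih =>
    rw [Function.iterate_succ_apply']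
    obtain ⟨h1, h2⟩ := Dop_natDegree hc ih.2
    exact ⟨h1.trans ih.1, h2⟩

noncomputable def expPoly {m : ℕ} (P : Fin m → Polynomial ℝ) (c : Fin m → ℝ) : ℝ → ℝ :=
  fun x => ∑ i, (P i).eval x * Real.exp (c i * x)

lemma expPoly_hasDerivAt {m : ℕ} (P : Fin m → Polynomial ℝ) (c : Fin m → ℝ) (x : ℝ) :
    HasDerivAt (expPoly P c) (expPoly (fun i => Dop (c i) (P i)) c x) x := by
  unfold expPoly
  apply HasDerivAt.fun_sum
  intro i _
  have h1 : HasDerivAt (fun x => (P i).eval x) ((Polynomial.derivative (P i)).eval x) x :=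
    (P i).hasDerivAt x
  have h2 : HasDerivAt (fun x => Real.exp (c i * x)) (Real.exp (c i * x) * c i) x := by
    have := (Real.hasDerivAt_exp (c i * x)).comp x ((hasDerivAt_id x).const_mul (c i))
    exact this.congr_deriv (by simp)
  have := h1.fun_mul h2
  refine this.congr_deriv ?_
  simp [Dop]
  ring

lemma expPoly_differentiable {m : ℕ} (P : Fin m → Polynomial ℝ) (c : Fin m → ℝ) :
    Differentiable ℝ (expPoly P c) :=
  fun x => (expPoly_hasDerivAt P c x).differentiableAt

lemma expPoly_deriv {m : ℕ} (P : Fin m → Polynomial ℝ) (c : Fin m → ℝ) :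
    deriv (expPoly P c) = expPoly (fun i => Dop (c i) (P i)) c := by
  funext x
  exact (expPoly_hasDerivAt P c x).deriv

lemma expPoly_iter_deriv {m : ℕ} (P : Fin m → Polynomial ℝ) (c : Fin m → ℝ) (d : ℕ) :
    deriv^[d] (expPoly P c) = expPoly (fun i => (Dop (c i))^[d] (P i)) c := by
  induction d generalizing P with
  | zero => rfl
  | succ d ih =>
    rw [Function.iterate_succ_apply, expPoly_deriv, ih]
    simp only [← Function.iterate_succ_apply]

lemma poly_encard {p : Polynomial ℝ} (hp : p ≠ 0) :
    {x : ℝ | p.eval x = 0}.encard ≤ (p.natDegree : ℕ∞) := by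
  have hset : {x : ℝ | p.eval x = 0} = ↑p.roots.toFinset := by
    ext x
    simp [Polynomial.mem_roots', hp, Polynomial.IsRoot]
  rw [hset, Set.encard_coe_eq_coe_finsetCard]
  exact_mod_cast le_trans (Multiset.toFinset_card_le _) (Polynomial.card_roots' p)

lemma iter_rolle {m : ℕ} (P : Fin m → Polynomial ℝ) (c : Fin m → ℝ) (d : ℕ) :
    {x | expPoly P c x = 0}.encard ≤ {x | deriv^[d] (expPoly P c) x = 0}.encard + d := by
  induction d with
  | zero => simp
  | succ d ih =>
    refine le_trans ih ?_
    have h1 : {x | deriv^[d] (expPoly P c) x = 0}.encard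
        ≤ {x | deriv^[d+1] (expPoly P c) x = 0}.encard + 1 := by
      rw [expPoly_iter_deriv]
      have := rolle_encard (expPoly_differentiable (fun i => (Dop (c i))^[d] (P i)) c)
      rw [expPoly_deriv] at this
      refine le_trans this ?_
      rw [expPoly_iter_deriv]
      apply add_le_add_left
      apply le_of_eq
      congr 1
      funext i
      simp only [← Function.iterate_succ_apply']
    calc {x | deriv^[d] (expPoly P c) x = 0}.encard + d
        ≤ ({x | deriv^[d+1] (expPoly P c) x = 0}.encard + 1) + d := by
          exact add_le_add_left h1 _
      _ = {x | deriv^[d+1] (expPoly P c) x = 0}.encard + (d+1 : ℕ) := by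
          push_cast; ring

theorem aux : ∀ (n : ℕ) (P : Fin (n+1) → Polynomial ℝ) (μ : Fin (n+1) → ℝ),
    Function.Injective μ → (∀ i, P i ≠ 0) →
    {x : ℝ | ∑ i, (P i).eval x * Real.exp (μ i * x) = 0}.encard
      ≤ ((∑ i, (1 + (P i).natDegree)) - 1 : ℕ) := by
  intro n
  induction n with
  | zero =>
    intro P μ hμ hP
    have hset : {x : ℝ | ∑ i, (P i).eval x * Real.exp (μ i * x) = 0}
        = {x : ℝ | (P 0).eval x = 0} := by
      ext x
      simp [Fin.sum_univ_one, mul_eq_zero, Real.exp_ne_zero]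
    rw [hset, Fin.sum_univ_one]
    have := poly_encard (hP 0)
    refine le_trans this ?_
    norm_cast
    omega
  | succ n ih =>
    intro P μ hμ hP
    set L : Fin (n+2) := Fin.last (n+1) with hL
    set ν : Fin (n+2) → ℝ := fun i => μ i - μ L with hν
    set d : ℕ := 1 + (P L).natDegree with hd
    -- zero set of original f equals zero set of g = expPoly P ν
    have hset : {x : ℝ | ∑ i, (P i).eval x * Real.exp (μ i * x) = 0}
        = {x | expPoly P ν x = 0} := by
      ext x
      have hfg : ∑ i, (P i).eval x * Real.exp (μ i * x)
          = (expPoly P ν x) * Real.exp (μ L * x) := by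
        rw [expPoly, Finset.sum_mul]
        congr 1
        funext i
        rw [mul_assoc, ← Real.exp_add]
        simp only [hν]
        ring_nf
      simp only [Set.mem_setOf_eq, hfg, mul_eq_zero, Real.exp_ne_zero, or_false]
    rw [hset]
    -- iterate d derivatives
    have step1 := iter_rolle P ν d
    rw [expPoly_iter_deriv] at step1
    -- the d-th derivative: last term vanishes
    set Q : Fin (n+1) → Polynomial ℝ := fun i => (Dop (ν i.castSucc))^[d] (P i.castSucc) with hQ
    have hν0 : ∀ i : Fin (n+1), ν i.castSucc ≠ 0 := by
      intro i
      simp only [hν, sub_ne_zero]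
      intro h
      exact absurd (hμ h) (Fin.castSucc_lt_last i).ne
    have hQdeg : ∀ i, (Q i).natDegree = (P i.castSucc).natDegree ∧ Q i ≠ 0 :=
      fun i => Dop_iter_natDegree (hν0 i) (hP i.castSucc) d
    have hlast : (Dop (ν L))^[d] (P L) = 0 := by
      have : ν L = 0 := by simp [hν]
      rw [this]
      have hfun : Dop 0 = ⇑(Polynomial.derivative (R := ℝ)) := funext Dop_zero
      rw [hfun]
      exact Polynomial.iterate_derivative_eq_zero (by omega)
    have hdrop : expPoly (fun i => (Dop (ν i))^[d] (P i)) ν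
        = expPoly Q (fun i => ν i.castSucc) := by
      funext x
      rw [expPoly, expPoly, Fin.sum_univ_castSucc, hlast]
      simp
      rfl
    rw [hdrop] at step1
    -- apply IH
    have hinj : Function.Injective (fun i : Fin (n+1) => ν i.castSucc) := by
      intro a b hab
      simp only [hν, sub_left_inj] at hab
      exact Fin.castSucc_injective _ (hμ hab)
    have hIH := ih Q (fun i => ν i.castSucc) hinj (fun i => (hQdeg i).2)
    -- combine
    have hQsum : ∑ i, (1 + (Q i).natDegree) = ∑ i : Fin (n+1), (1 + (P i.castSucc).natDegree) := by
      apply Finset.sum_congr rfl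
      intro i _
      rw [(hQdeg i).1]
    rw [hQsum] at hIH
    have hsum : ∑ i : Fin (n+2), (1 + (P i).natDegree)
        = (∑ i : Fin (n+1), (1 + (P i.castSucc).natDegree)) + d := by
      rw [Fin.sum_univ_castSucc, hd]
    set S := ∑ i : Fin (n+1), (1 + (P i.castSucc).natDegree) with hS
    have hS1 : 1 ≤ S := by
      rw [hS]
      calc 1 ≤ ∑ i : Fin (n+1), 1 := by simp
        _ ≤ _ := Finset.sum_le_sum (fun i _ => Nat.le_add_right _ _)
    calc {x | expPoly P ν x = 0}.encard
        ≤ {x | expPoly Q (fun i => ν i.castSucc) x = 0}.encard + d := step1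
      _ ≤ ((S - 1 : ℕ) : ℕ∞) + (d : ℕ∞) := add_le_add_left hIH _
      _ = ((S - 1 + d : ℕ) : ℕ∞) := by push_cast; ring
      _ = ((S + d - 1 : ℕ) : ℕ∞) := by congr 1; omega
      _ = _ := by rw [hsum]

/-- Pólya–Szegő bound: an exponential polynomial `x ↦ ∑ i, P i (x) * exp (μ i * x)`
with pairwise distinct `μ i` and nonzero polynomials `P i` has at most
`(∑ i, (1 + deg (P i))) - 1` real roots. -/
theorem stmt_1 (n : ℕ) (hn : 0 < n) (P : Fin n → Polynomial ℝ) (μ : Fin n → ℝ)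
    (hμ : Function.Injective μ) (hP : ∀ i, P i ≠ 0) :
    {x : ℝ | ∑ i, (P i).eval x * Real.exp (μ i * x) = 0}.encard
      ≤ ((∑ i, (1 + (P i).natDegree)) - 1 : ℕ) := by
  cases n with
  | zero => omega
  | succ m => exact aux m P μ hμ hP
end

section
/- Let λ ∈ ℝ and φ_λ(v) = 1/(T(v) - λ v) where T : (-1,1) → ℝ is positive and ν is a probability measure on (-1,1), and suppose λ, μ are two 'eigenvalues', i.e., ∫ T(v)/(T(v)-λv) dν = 1 and ∫ T(v)/(T(v)-μv) dν = 1, with T(v) - λv ≠ 0 and T(v) - μv ≠ 0 ν-a.e. If λ ≠ μ, then ∫ v φ_λ(v) φ_μ(v) T(v) dν(v) = 0. -/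
open MeasureTheory

/-- Orthogonality of Case's eigenfunctions: if `λ ≠ μ` are two eigenvalues, i.e.
`∫ T/(T - λ v) dν = 1` and `∫ T/(T - μ v) dν = 1`, then
`∫ v φ_λ(v) φ_μ(v) T(v) dν(v) = 0` where `φ_λ(v) = 1/(T(v) - λ v)`. -/
theorem stmt_2 (ν : Measure ℝ) [IsProbabilityMeasure ν]
    (hsupp : ν (Set.Ioo (-1 : ℝ) 1)ᶜ = 0)
    (T : ℝ → ℝ) (hT : ∀ᵐ v ∂ν, 0 < T v) (lam mu : ℝ)
    (hlam0 : ∀ᵐ v ∂ν, T v - lam * v ≠ 0) (hmu0 : ∀ᵐ v ∂ν, T v - mu * v ≠ 0)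
    (hInt : Integrable (fun v => v * (1 / (T v - lam * v)) * (1 / (T v - mu * v)) * T v) ν)
    (heig1 : ∫ v, T v / (T v - lam * v) ∂ν = 1)
    (heig2 : ∫ v, T v / (T v - mu * v) ∂ν = 1)
    (hne : lam ≠ mu) :
    ∫ v, v * (1 / (T v - lam * v)) * (1 / (T v - mu * v)) * T v ∂ν = 0 := by
  have h1 : Integrable (fun v => T v / (T v - lam * v)) ν := by
    by_contra h
    rw [integral_undef h] at heig1; norm_num at heig1
  have h2 : Integrable (fun v => T v / (T v - mu * v)) ν := by
    by_contra h
    rw [integral_undef h] at heig2; norm_num at heig2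
  have key : ∫ v, (T v / (T v - lam * v) - T v / (T v - mu * v)) ∂ν
      = (lam - mu) * ∫ v, v * (1 / (T v - lam * v)) * (1 / (T v - mu * v)) * T v ∂ν := by
    rw [← integral_const_mul]
    apply integral_congr_ae
    filter_upwards [hlam0, hmu0] with v hl hm
    rw [div_sub_div _ _ hl hm, eq_comm, eq_div_iff (mul_ne_zero hl hm)]
    field_simp
    ring
  rw [integral_sub h1 h2, heig1, heig2, sub_self] at key
  rcases mul_eq_zero.mp key.symm with h | h
  · exact absurd (sub_eq_zero.mp h) hne
  · exact h
end

section
/- Let 0 < λ_1 < λ_2 < ... < λ_{K-1} be positive reals and 0 < v_1 < v_2 < ... < v_K be positive reals with λ_i v_k ≠ 1 for all i,k. Then the K vectors (1,...,1), (1/(1-λ_1 v_k))_{k=1..K}, ..., (1/(1-λ_{K-1} v_k))_{k=1..K} form a basis of ℝ^K. -/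
open Polynomial Finset

/-- For `0 = λ_0 < λ_1 < ... < λ_{K-1}` and `0 < v_1 < ... < v_K`, with `λ_i v_k ≠ 1`,
the `K` vectors `(1/(1 - λ_i v_k))_k` (the first of which, for `λ_0 = 0`, is the all-ones
vector) form a basis of `ℝ^K`: they are linearly independent and span. -/
theorem stmt_4 (K : ℕ) (hK : 0 < K) (lam v : Fin K → ℝ)
    (hlam : StrictMono lam) (hlam0 : lam ⟨0, hK⟩ = 0)
    (hv : StrictMono v) (hvpos : ∀ k, 0 < v k)
    (hne : ∀ i k, lam i * v k ≠ 1) :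
    LinearIndependent ℝ (fun i k => 1 / (1 - lam i * v k) : Fin K → Fin K → ℝ) ∧
      Submodule.span ℝ
        (Set.range (fun i k => 1 / (1 - lam i * v k) : Fin K → Fin K → ℝ)) = ⊤ := by
  classical
  have hlne : ∀ i k, (1 : ℝ) - lam i * v k ≠ 0 := by
    intro i k h
    exact hne i k (by linarith)
  -- lam i = 0 iff i is the zero index
  have hlampos : ∀ i : Fin K, i ≠ ⟨0, hK⟩ → 0 < lam i := by
    intro i hi
    have h0 : (⟨0, hK⟩ : Fin K) < i := by
      rcases Nat.pos_of_ne_zero (fun h => hi (Fin.ext h)) with h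
      exact Fin.mk_lt_of_lt_val (by simpa using Nat.pos_of_ne_zero (fun h => hi (Fin.ext h)))
    have := hlam h0
    rw [hlam0] at this
    exact this
  have hli : LinearIndependent ℝ (fun i k => 1 / (1 - lam i * v k) : Fin K → Fin K → ℝ) := by
    rw [Fintype.linearIndependent_iff]
    intro g hg
    have hgk : ∀ k, ∑ i, g i / (1 - lam i * v k) = 0 := by
      intro k
      have h := congrFun hg k
      simpa [Finset.sum_apply, div_eq_mul_inv] using h
    -- the polynomial P = ∑ i, g i * ∏_{j ≠ i} (1 - lam j X)
    set P : ℝ[X] := ∑ i, C (g i) * ∏ j ∈ univ.erase i, (1 - C (lam j) * X) with hP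
    have hfac : ∀ j : Fin K, ((1 : ℝ[X]) - C (lam j) * X).natDegree ≤ 1 := by
      intro j
      refine (natDegree_sub_le _ _).trans ?_
      simp only [natDegree_one, max_le_iff]
      exact ⟨Nat.zero_le 1, (natDegree_C_mul_le _ _).trans natDegree_X_le⟩
    have hdeg : P.natDegree < K := by
      have : P.natDegree ≤ K - 1 := by
        refine natDegree_sum_le_of_forall_le _ _ ?_
        intro i _
        refine (natDegree_mul_le).trans ?_
        simp only [natDegree_C, zero_add]
        refine (natDegree_prod_le _ _).trans ?_
        have hb : ∑ j ∈ univ.erase i, ((1 : ℝ[X]) - C (lam j) * X).natDegree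
            ≤ ∑ _j ∈ univ.erase i, 1 := Finset.sum_le_sum fun j _ => hfac j
        refine hb.trans ?_
        simp
      omega
    have hevalP : ∀ x : ℝ, P.eval x = ∑ i, g i * ∏ j ∈ univ.erase i, (1 - lam j * x) := by
      intro x
      simp [hP, eval_finset_sum, eval_prod]
    have heval : ∀ k, P.eval (v k) = 0 := by
      intro k
      rw [hevalP]
      have h2 : ∀ i : Fin K, g i * ∏ j ∈ univ.erase i, (1 - lam j * v k)
          = (∏ j, (1 - lam j * v k)) * (g i / (1 - lam i * v k)) := by
        intro i
        have hm := Finset.mul_prod_erase univ (fun j => 1 - lam j * v k) (Finset.mem_univ i)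
        rw [← hm, mul_comm ((fun j => 1 - lam j * v k) i), mul_assoc,
          mul_comm ((fun j => 1 - lam j * v k) i), div_mul_cancel₀ _ (hlne i k), mul_comm]
      rw [Finset.sum_congr rfl fun i _ => h2 i, ← Finset.mul_sum, hgk k, mul_zero]
    have hP0 : P = 0 := by
      refine eq_zero_of_natDegree_lt_card_of_eval_eq_zero P hv.injective heval ?_
      simpa using hdeg
    -- g i = 0 for all i with lam i ≠ 0
    have hgz : ∀ i : Fin K, i ≠ ⟨0, hK⟩ → g i = 0 := by
      intro i hi
      have hpos := hlampos i hi
      have h0 : P.eval (lam i)⁻¹ = 0 := by rw [hP0]; simp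
      rw [hevalP] at h0
      have hsingle : ∀ i' : Fin K, i' ≠ i →
          g i' * ∏ j ∈ univ.erase i', (1 - lam j * (lam i)⁻¹) = 0 := by
        intro i' hi'
        have : ∏ j ∈ univ.erase i', (1 - lam j * (lam i)⁻¹) = 0 := by
          refine Finset.prod_eq_zero (Finset.mem_erase.mpr ⟨fun h => hi' h.symm, Finset.mem_univ i⟩) ?_
          rw [mul_inv_cancel₀ hpos.ne']
          ring
        rw [this, mul_zero]
      rw [Finset.sum_eq_single i (fun i' _ h => hsingle i' h) (fun h => (h (Finset.mem_univ i)).elim)] at h0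
      have hprodne : ∏ j ∈ univ.erase i, (1 - lam j * (lam i)⁻¹) ≠ 0 := by
        refine Finset.prod_ne_zero_iff.mpr ?_
        intro j hj h
        have hji : lam j = lam i := by
          field_simp at h
          linarith
        exact (Finset.mem_erase.mp hj).1 (hlam.injective hji)
      exact (mul_eq_zero.mp h0).resolve_right hprodne
    intro i
    by_cases hi : i = ⟨0, hK⟩
    · subst hi
      have h := hgk ⟨0, hK⟩
      rw [Finset.sum_eq_single (⟨0, hK⟩ : Fin K)
        (fun i' _ h => by rw [hgz i' h, zero_div])
        (fun h => (h (Finset.mem_univ _)).elim)] at h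
      rw [hlam0] at h
      simpa using h
    · exact hgz i hi
  refine ⟨hli, ?_⟩
  haveI : Nonempty (Fin K) := ⟨⟨0, hK⟩⟩
  have hcard : Fintype.card (Fin K) = Module.finrank ℝ (Fin K → ℝ) := by
    simp [Module.finrank_fin_fun]
  let b := basisOfLinearIndependentOfCardEqFinrank hli hcard
  have hb : ⇑b = (fun i k => 1 / (1 - lam i * v k) : Fin K → Fin K → ℝ) :=
    coe_basisOfLinearIndependentOfCardEqFinrank hli hcard
  have := b.span_eq
  rwa [hb] at this
end

section
/- Any nontrivial real linear combination a_0 + Σ_{i=1}^{K-1} a_i/(1-λ_i v), with 0 < λ_1 < ... < λ_{K-1}, has at most K-1 roots v in (0,+∞) \ {1/λ_1,...,1/λ_{K-1}}. -/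
open Polynomial Finset

/-- Any nontrivial linear combination `a_0 + ∑_{i=1}^{m} a_i / (1 - λ_i v)`, with
`0 < λ_1 < ... < λ_m`, has at most `m` roots `v` in `(0, +∞) \ {1/λ_1, ..., 1/λ_m}`
(for `m = K - 1` functions plus the constant, this is the "at most `K - 1` roots" bound). -/
theorem stmt_6 (m : ℕ) (lam : Fin m → ℝ) (hlam : StrictMono lam)
    (hpos : ∀ i, 0 < lam i) (a0 : ℝ) (a : Fin m → ℝ)
    (hnontriv : ¬(a0 = 0 ∧ a = 0)) :
    {v : ℝ | 0 < v ∧ (∀ i, lam i * v ≠ 1) ∧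
        a0 + ∑ i, a i / (1 - lam i * v) = 0}.encard ≤ (m : ℕ∞) := by
  classical
  set P : Polynomial ℝ :=
    C a0 * ∏ j, (1 - C (lam j) * X) +
      ∑ i, C (a i) * ∏ j ∈ univ.erase i, (1 - C (lam j) * X) with hP
  have hfac : ∀ (s : Finset (Fin m)) (v : ℝ),
      Polynomial.eval v (∏ j ∈ s, (1 - C (lam j) * X)) = ∏ j ∈ s, (1 - lam j * v) := by
    intro s v; simp [Polynomial.eval_prod]
  have hevalP : ∀ v : ℝ, Polynomial.eval v P =
      a0 * ∏ j, (1 - lam j * v) + ∑ i, a i * ∏ j ∈ univ.erase i, (1 - lam j * v) := by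
    intro v
    simp [hP, Polynomial.eval_prod, Polynomial.eval_finset_sum]
  -- degree bound
  have hdegprod : ∀ s : Finset (Fin m),
      (∏ j ∈ s, (1 - C (lam j) * X) : ℝ[X]).natDegree ≤ s.card := by
    intro s
    calc (∏ j ∈ s, (1 - C (lam j) * X) : ℝ[X]).natDegree
        ≤ ∑ j ∈ s, (1 - C (lam j) * X : ℝ[X]).natDegree := natDegree_prod_le _ _
      _ ≤ ∑ _j ∈ s, 1 := by
          refine Finset.sum_le_sum ?_
          intro j _
          calc (1 - C (lam j) * X : ℝ[X]).natDegree
              ≤ max (1 : ℝ[X]).natDegree (C (lam j) * X).natDegree := natDegree_sub_le _ _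
            _ ≤ 1 := by
                simp [natDegree_C_mul_X _ (ne_of_gt (hpos j))]
      _ = s.card := by simp
  have hdegP : P.natDegree ≤ m := by
    refine le_trans (natDegree_add_le _ _) (max_le ?_ ?_)
    · refine le_trans (natDegree_mul_le) ?_
      simpa using hdegprod univ
    · refine Polynomial.natDegree_sum_le_of_forall_le _ _ ?_
      intro i _
      refine le_trans (natDegree_mul_le) ?_
      have := hdegprod (univ.erase i)
      simp only [natDegree_C, zero_add]
      refine le_trans this ?_
      simp [Finset.card_erase_of_mem]
  -- P ≠ 0
  have hPne : P ≠ 0 := by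
    by_cases ha : ∃ i, a i ≠ 0
    · obtain ⟨i, hi⟩ := ha
      intro h0
      have hev := hevalP (1 / lam i)
      rw [h0] at hev
      simp only [Polynomial.eval_zero] at hev
      have hli : lam i ≠ 0 := ne_of_gt (hpos i)
      have h1 : (∏ j, (1 - lam j * (1 / lam i))) = 0 :=
        Finset.prod_eq_zero (Finset.mem_univ i) (by field_simp; ring)
      have h2 : ∀ k ∈ univ, k ≠ i →
          a k * ∏ j ∈ univ.erase k, (1 - lam j * (1 / lam i)) = 0 := by
        intro k _ hk
        have : (∏ j ∈ univ.erase k, (1 - lam j * (1 / lam i))) = 0 :=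
          Finset.prod_eq_zero (Finset.mem_erase.2 ⟨fun h => hk h.symm, Finset.mem_univ i⟩)
            (by field_simp; ring)
        rw [this, mul_zero]
      rw [Finset.sum_eq_single i h2 (by simp)] at hev
      simp only [h1, mul_zero, zero_add] at hev
      have hprod : (∏ j ∈ univ.erase i, (1 - lam j * (1 / lam i))) ≠ 0 := by
        refine Finset.prod_ne_zero_iff.2 ?_
        intro j hj
        have hji : j ≠ i := (Finset.mem_erase.1 hj).1
        have : lam j ≠ lam i := fun h => hji (hlam.injective h)
        intro h
        apply this
        field_simp at h
        linarith
      exact (mul_ne_zero hi hprod) hev.symm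
    · push_neg at ha
      have haz : a = 0 := funext fun i => ha i
      have ha0 : a0 ≠ 0 := fun h => hnontriv ⟨h, haz⟩
      intro h0
      have hev := hevalP 0
      rw [h0] at hev
      simp [haz] at hev
      exact ha0 hev.symm
  -- roots containment
  have hsub : {v : ℝ | 0 < v ∧ (∀ i, lam i * v ≠ 1) ∧
      a0 + ∑ i, a i / (1 - lam i * v) = 0} ⊆ ↑(P.roots.toFinset) := by
    intro v hv
    obtain ⟨hv0, hne, hsum⟩ := hv
    have hne' : ∀ i, (1 : ℝ) - lam i * v ≠ 0 := fun i => sub_ne_zero.2 (Ne.symm (hne i))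
    have : Polynomial.eval v P = 0 := by
      rw [hevalP]
      have key : ∀ i : Fin m, a i * ∏ j ∈ univ.erase i, (1 - lam j * v)
          = (∏ j, (1 - lam j * v)) * (a i / (1 - lam i * v)) := by
        intro i
        rw [← Finset.mul_prod_erase univ _ (Finset.mem_univ i)]
        rw [mul_comm (1 - lam i * v), mul_assoc, mul_div_assoc', mul_div_cancel_left₀ _ (hne' i)]
        ring
      rw [Finset.sum_congr rfl fun i _ => key i, ← Finset.mul_sum]
      have : a0 = - ∑ i, a i / (1 - lam i * v) := by linarith
      rw [this]
      ring
    simp only [Multiset.mem_toFinset, Finset.coe_sort_coe, Finset.mem_coe,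
      Polynomial.mem_roots hPne]
    exact this
  calc _ ≤ (P.roots.toFinset : Set ℝ).encard := Set.encard_le_encard hsub
    _ = (P.roots.toFinset.card : ℕ∞) := Set.encard_coe_eq_coe_finsetCard _
    _ ≤ (m : ℕ∞) := by
        have h1 : P.roots.toFinset.card ≤ Multiset.card P.roots :=
          Multiset.toFinset_card_le _
        have h2 : Multiset.card P.roots ≤ P.natDegree := Polynomial.card_roots' P
        exact_mod_cast le_trans h1 (le_trans h2 hdegP)
end

section
/- Let 0 < λ_1 < ... < λ_{K-1}, 0 < μ_1 < ... < μ_{K-1}, and 0 < v_1 < ... < v_K, with all λ_i v_k ≠ 1 and μ_j v_k ≠ 1. If real numbers a_0,...,a_{K-1}, b_0,...,b_{K-1} satisfy, for all k = 1,...,K, both (a_0-b_0) + Σ_ℓ (a_ℓ/(1-λ_ℓ v_k) - b_ℓ/(1+μ_ℓ v_k)) = 0 and (a_0-b_0) + Σ_ℓ (a_ℓ/(1+λ_ℓ v_k) - b_ℓ/(1-μ_ℓ v_k)) = 0, then a_0 = b_0 and a_ℓ = b_ℓ = 0 for ℓ = 1,...,K-1. -/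
open Polynomial Finset

/-- Kernel identification step: if the two families of equations at `±v_k` hold for all
`k = 1, ..., K`, then `a_0 = b_0` and all other coefficients vanish. -/
theorem stmt_7 (K : ℕ) (hK : 0 < K)
    (lam mu : Fin (K - 1) → ℝ) (v : Fin K → ℝ)
    (hlam : StrictMono lam) (hlampos : ∀ ℓ, 0 < lam ℓ)
    (hmu : StrictMono mu) (hmupos : ∀ ℓ, 0 < mu ℓ)
    (hv : StrictMono v) (hvpos : ∀ k, 0 < v k)
    (hlamne : ∀ ℓ k, lam ℓ * v k ≠ 1) (hmune : ∀ ℓ k, mu ℓ * v k ≠ 1)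
    (a0 b0 : ℝ) (a b : Fin (K - 1) → ℝ)
    (h1 : ∀ k, (a0 - b0) +
        ∑ ℓ, (a ℓ / (1 - lam ℓ * v k) - b ℓ / (1 + mu ℓ * v k)) = 0)
    (h2 : ∀ k, (a0 - b0) +
        ∑ ℓ, (a ℓ / (1 + lam ℓ * v k) - b ℓ / (1 - mu ℓ * v k)) = 0) :
    a0 = b0 ∧ (∀ ℓ, a ℓ = 0) ∧ ∀ ℓ, b ℓ = 0 := by
  classical
  have hlamne' : ∀ ℓ : Fin (K - 1), lam ℓ ≠ 0 := fun ℓ => ne_of_gt (hlampos ℓ)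
  have hmune' : ∀ ℓ : Fin (K - 1), mu ℓ ≠ 0 := fun ℓ => ne_of_gt (hmupos ℓ)
  set fl : Fin (K - 1) → ℝ[X] := fun i => 1 - C (lam i) * X with hfl
  set fm : Fin (K - 1) → ℝ[X] := fun j => 1 + C (mu j) * X with hfm
  set L : ℝ[X] := ∏ i, fl i with hL
  set M : ℝ[X] := ∏ j, fm j with hM
  set P : ℝ[X] := C (a0 - b0) * (L * M)
      + (∑ ℓ, C (a ℓ) * ((∏ i ∈ univ.erase ℓ, fl i) * M))
      - ∑ ℓ, C (b ℓ) * (L * ∏ j ∈ univ.erase ℓ, fm j) with hP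
  have evalP : ∀ x : ℝ, P.eval x =
      (a0 - b0) * ((∏ i, (1 - lam i * x)) * ∏ j, (1 + mu j * x))
      + (∑ ℓ, a ℓ * ((∏ i ∈ univ.erase ℓ, (1 - lam i * x)) * ∏ j, (1 + mu j * x)))
      - ∑ ℓ, b ℓ * ((∏ i, (1 - lam i * x)) * ∏ j ∈ univ.erase ℓ, (1 + mu j * x)) := by
    intro x
    simp [hP, hL, hM, hfl, hfm, eval_prod, eval_finset_sum]
  -- P vanishes at points where the fractional equation holds
  have hroot : ∀ x : ℝ, (∀ i, 1 - lam i * x ≠ 0) → (∀ j, 1 + mu j * x ≠ 0) →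
      (a0 - b0) + ∑ ℓ, (a ℓ / (1 - lam ℓ * x) - b ℓ / (1 + mu ℓ * x)) = 0 →
      P.eval x = 0 := by
    intro x hne1 hne2 hsum
    rw [evalP]
    have e1 : ∀ ℓ : Fin (K - 1), (∏ i ∈ univ.erase ℓ, (1 - lam i * x))
        = (∏ i, (1 - lam i * x)) / (1 - lam ℓ * x) := by
      intro ℓ
      rw [eq_div_iff (hne1 ℓ), Finset.prod_erase_mul _ _ (mem_univ ℓ)]
    have e2 : ∀ ℓ : Fin (K - 1), (∏ j ∈ univ.erase ℓ, (1 + mu j * x))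
        = (∏ j, (1 + mu j * x)) / (1 + mu ℓ * x) := by
      intro ℓ
      rw [eq_div_iff (hne2 ℓ), Finset.prod_erase_mul _ _ (mem_univ ℓ)]
    simp only [e1, e2]
    set A := ∏ i, (1 - lam i * x) with hA
    set B := ∏ j, (1 + mu j * x) with hB
    have key : (a0 - b0) * (A * B)
        + (∑ ℓ, a ℓ * (A / (1 - lam ℓ * x) * B))
        - ∑ ℓ, b ℓ * (A * (B / (1 + mu ℓ * x)))
        = ((a0 - b0) + ∑ ℓ, (a ℓ / (1 - lam ℓ * x) - b ℓ / (1 + mu ℓ * x))) * (A * B) := by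
      rw [add_mul, Finset.sum_mul]
      have h3 : ∀ ℓ : Fin (K - 1), (a ℓ / (1 - lam ℓ * x) - b ℓ / (1 + mu ℓ * x)) * (A * B)
          = a ℓ * (A / (1 - lam ℓ * x) * B) - b ℓ * (A * (B / (1 + mu ℓ * x))) := by
        intro ℓ; ring
      rw [Finset.sum_congr rfl fun ℓ _ => h3 ℓ, Finset.sum_sub_distrib]
      ring
    rw [key, hsum, zero_mul]
  -- degree bound
  have hdl : ∀ i, (fl i).natDegree ≤ 1 := by
    intro i
    rw [hfl]
    refine le_trans (natDegree_sub_le _ _) (max_le (by simp) ?_)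
    exact le_trans natDegree_mul_le (by simp)
  have hdm : ∀ j, (fm j).natDegree ≤ 1 := by
    intro j
    rw [hfm]
    refine le_trans (natDegree_add_le _ _) (max_le (by simp) ?_)
    exact le_trans natDegree_mul_le (by simp)
  have hprodl : ∀ s : Finset (Fin (K - 1)), (∏ i ∈ s, fl i).natDegree ≤ K - 1 := by
    intro s
    refine le_trans (natDegree_prod_le _ _) (le_trans (Finset.sum_le_card_nsmul _ _ 1
      fun i _ => hdl i) ?_)
    simp only [smul_eq_mul, mul_one]
    exact le_trans (Finset.card_le_card (Finset.subset_univ s)) (by simp)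
  have hprodm : ∀ s : Finset (Fin (K - 1)), (∏ j ∈ s, fm j).natDegree ≤ K - 1 := by
    intro s
    refine le_trans (natDegree_prod_le _ _) (le_trans (Finset.sum_le_card_nsmul _ _ 1
      fun j _ => hdm j) ?_)
    simp only [smul_eq_mul, mul_one]
    exact le_trans (Finset.card_le_card (Finset.subset_univ s)) (by simp)
  have hPdeg : P.natDegree ≤ (K - 1) + (K - 1) := by
    rw [hP]
    refine le_trans (natDegree_sub_le _ _) (max_le ?_ ?_)
    · refine le_trans (natDegree_add_le _ _) (max_le ?_ ?_)
      · refine le_trans (natDegree_mul_le) ?_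
        simp only [natDegree_C, zero_add]
        exact le_trans natDegree_mul_le (add_le_add (hprodl _) (hprodm _))
      · refine natDegree_sum_le_of_forall_le _ _ fun ℓ _ => ?_
        refine le_trans (natDegree_mul_le) ?_
        simp only [natDegree_C, zero_add]
        exact le_trans natDegree_mul_le (add_le_add (hprodl _) (hprodm _))
    · refine natDegree_sum_le_of_forall_le _ _ fun ℓ _ => ?_
      refine le_trans (natDegree_mul_le) ?_
      simp only [natDegree_C, zero_add]
      exact le_trans natDegree_mul_le (add_le_add (hprodl _) (hprodm _))
  -- the 2K roots force P = 0
  have hP0 : P = 0 := by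
    have hinj : Function.Injective (Sum.elim v (fun k => -(v k)) : Fin K ⊕ Fin K → ℝ) := by
      rintro (i | i) (j | j) h <;> simp only [Sum.elim_inl, Sum.elim_inr] at h
      · exact congrArg Sum.inl (hv.injective h)
      · exact absurd h (by have := hvpos i; have := hvpos j; intro hc; linarith)
      · exact absurd h (by have := hvpos i; have := hvpos j; intro hc; linarith)
      · exact congrArg Sum.inr (hv.injective (neg_injective h))
    refine eq_zero_of_natDegree_lt_card_of_eval_eq_zero P hinj ?_ ?_
    · rintro (k | k)
      · exact hroot (v k) (fun i => sub_ne_zero_of_ne (Ne.symm (hlamne i k)))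
          (fun j => ne_of_gt (by nlinarith [mul_pos (hmupos j) (hvpos k)])) (h1 k)
      · simp only [Sum.elim_inr]
        refine hroot (-(v k)) (fun i => ne_of_gt (by nlinarith [mul_pos (hlampos i) (hvpos k)]))
          (fun j => ?_) ?_
        · intro hc
          apply hmune j k
          have : mu j * -(v k) = -(mu j * v k) := by ring
          rw [this] at hc
          linarith
        · calc (a0 - b0) + ∑ ℓ, (a ℓ / (1 - lam ℓ * (-(v k))) - b ℓ / (1 + mu ℓ * (-(v k))))
              = (a0 - b0) + ∑ ℓ, (a ℓ / (1 + lam ℓ * v k) - b ℓ / (1 - mu ℓ * v k)) := by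
                congr 1
                refine Finset.sum_congr rfl fun ℓ _ => ?_
                rw [show (1 : ℝ) - lam ℓ * (-(v k)) = 1 + lam ℓ * v k by ring,
                  show (1 : ℝ) + mu ℓ * (-(v k)) = 1 - mu ℓ * v k by ring]
            _ = 0 := h2 k
    · have hc : Fintype.card (Fin K ⊕ Fin K) = K + K := by simp
      rw [hc]
      omega
  -- extract vanishing of a
  have ha : ∀ ℓ, a ℓ = 0 := by
    intro ℓ
    have hx := evalP ((lam ℓ)⁻¹)
    rw [hP0, eval_zero] at hx
    set x := (lam ℓ)⁻¹ with hxdef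
    have hxpos : 0 < x := inv_pos.mpr (hlampos ℓ)
    have hzero : (1 : ℝ) - lam ℓ * x = 0 := by
      rw [hxdef, mul_inv_cancel₀ (hlamne' ℓ)]; ring
    have hA0 : (∏ i, (1 - lam i * x)) = 0 :=
      Finset.prod_eq_zero (mem_univ ℓ) hzero
    have hsum : (∑ m, a m * ((∏ i ∈ univ.erase m, (1 - lam i * x)) * ∏ j, (1 + mu j * x)))
        = a ℓ * ((∏ i ∈ univ.erase ℓ, (1 - lam i * x)) * ∏ j, (1 + mu j * x)) := by
      refine Finset.sum_eq_single_of_mem ℓ (mem_univ ℓ) fun m _ hm => ?_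
      have hmem : ℓ ∈ univ.erase m := Finset.mem_erase.mpr ⟨Ne.symm hm, mem_univ ℓ⟩
      rw [Finset.prod_eq_zero hmem hzero, zero_mul, mul_zero]
    rw [hA0, hsum] at hx
    simp only [zero_mul, mul_zero, zero_add, sub_zero, mul_zero,
      Finset.sum_const_zero] at hx
    have hprodne : (∏ i ∈ univ.erase ℓ, (1 - lam i * x)) * (∏ j, (1 + mu j * x)) ≠ 0 := by
      apply mul_ne_zero
      · rw [Finset.prod_ne_zero_iff]
        intro i hi
        have hne : lam i ≠ lam ℓ := fun hc => (Finset.mem_erase.mp hi).1 (hlam.injective hc)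
        intro hc
        apply hne
        have h4 : lam i * x = 1 := by linarith
        rw [hxdef] at h4
        field_simp at h4
        exact (div_eq_one_iff_eq (hlamne' ℓ)).mp h4
      · exact ne_of_gt (Finset.prod_pos fun j _ => by nlinarith [mul_pos (hmupos j) hxpos])
    have h5 : a ℓ * ((∏ i ∈ univ.erase ℓ, (1 - lam i * x)) * ∏ j, (1 + mu j * x)) = 0 := by
      linarith [hx]
    rcases mul_eq_zero.mp h5 with h | h
    · exact h
    · exact absurd h hprodne
  -- extract vanishing of b
  have hb : ∀ ℓ, b ℓ = 0 := by
    intro ℓ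
    have hx := evalP (-(mu ℓ)⁻¹)
    rw [hP0, eval_zero] at hx
    set x := -(mu ℓ)⁻¹ with hxdef
    have hxneg : x < 0 := by
      rw [hxdef]
      exact neg_lt_zero.mpr (inv_pos.mpr (hmupos ℓ))
    have hzero : (1 : ℝ) + mu ℓ * x = 0 := by
      rw [hxdef, mul_neg, mul_inv_cancel₀ (hmune' ℓ)]; ring
    have hB0 : (∏ j, (1 + mu j * x)) = 0 :=
      Finset.prod_eq_zero (mem_univ ℓ) hzero
    have hsum : (∑ m, b m * ((∏ i, (1 - lam i * x)) * ∏ j ∈ univ.erase m, (1 + mu j * x)))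
        = b ℓ * ((∏ i, (1 - lam i * x)) * ∏ j ∈ univ.erase ℓ, (1 + mu j * x)) := by
      refine Finset.sum_eq_single_of_mem ℓ (mem_univ ℓ) fun m _ hm => ?_
      have hmem : ℓ ∈ univ.erase m := Finset.mem_erase.mpr ⟨Ne.symm hm, mem_univ ℓ⟩
      rw [Finset.prod_eq_zero hmem hzero, mul_zero, mul_zero]
    rw [hB0, hsum] at hx
    simp only [zero_mul, mul_zero, zero_add, add_zero, zero_sub,
      Finset.sum_const_zero] at hx
    have hprodne : (∏ i, (1 - lam i * x)) * (∏ j ∈ univ.erase ℓ, (1 + mu j * x)) ≠ 0 := by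
      apply mul_ne_zero
      · exact ne_of_gt (Finset.prod_pos fun i _ =>
          by nlinarith [mul_pos (hlampos i) (neg_pos.mpr hxneg)])
      · rw [Finset.prod_ne_zero_iff]
        intro j hj
        have hne : mu j ≠ mu ℓ := fun hc => (Finset.mem_erase.mp hj).1 (hmu.injective hc)
        intro hc
        apply hne
        have h4 : mu j * x = -1 := by linarith
        rw [hxdef, mul_neg] at h4
        have h6 : mu j * (mu ℓ)⁻¹ = 1 := by linarith
        field_simp at h6
        exact (div_eq_one_iff_eq (hmune' ℓ)).mp h6
    have h5 : b ℓ * ((∏ i, (1 - lam i * x)) * ∏ j ∈ univ.erase ℓ, (1 + mu j * x)) = 0 := by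
      linarith [hx]
    rcases mul_eq_zero.mp h5 with h | h
    · exact h
    · exact absurd h hprodne
  refine ⟨?_, ha, hb⟩
  have h0 := h1 ⟨0, hK⟩
  simp only [ha, hb, zero_div, sub_zero, Finset.sum_const_zero, add_zero, zero_sub] at h0
  linarith
end

section
/- Let R_0 = (Δt/Δx) V [[I_K, ζγ - I_K],[ζγ - I_K, I_K]] where V = diag(v_1,...,v_K,v_1,...,v_K) with v_k > 0, ζ_{kℓ} = 1/(1-v_k λ_ℓ) - 1/(1+v_k λ_ℓ) and γ satisfies γ·(1/(1-V⊗λ)) = I_{K-1} and γ·1 = 0, with 0 < λ_1 < ... < λ_{K-1} and 0 < v_1 < ... < v_K, λ_ℓ v_k ≠ 1. Then Ker(R_0) = span{1_{ℝ^{2K}}}. -/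
open Polynomial Finset in
lemma key_frac {n : ℕ} (a : Fin n → ℝ) (ha : Function.Injective a) (ha0 : ∀ i, a i ≠ 0)
    (x : Fin (n+1) → ℝ) (hx : Function.Injective x)
    (hax : ∀ i j, a i * x j ≠ 1)
    (c : Fin n → ℝ) (t : ℝ)
    (h : ∀ j, (∑ i, c i / (1 - a i * x j)) + t = 0) :
    (∀ i, c i = 0) ∧ t = 0 := by
  classical
  have hne0 : ∀ i j, (1 : ℝ) - a i * x j ≠ 0 := fun i j =>
    sub_ne_zero_of_ne (Ne.symm (hax i j))
  set p : ℝ[X] :=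
    (∑ i, C (c i) * ∏ m ∈ univ.erase i, (1 - C (a m) * X)) + C t * ∏ m, (1 - C (a m) * X)
    with hp
  have hdegfac : ∀ m : Fin n, (1 - C (a m) * X : ℝ[X]).natDegree ≤ 1 := by
    intro m
    refine (natDegree_sub_le _ _).trans (max_le (by simp) ((natDegree_C_mul_le _ _).trans (by simp)))
  have hdegprod : ∀ s : Finset (Fin n),
      (∏ m ∈ s, (1 - C (a m) * X : ℝ[X])).natDegree ≤ s.card := by
    intro s
    refine (natDegree_prod_le _ _).trans ?_
    calc ∑ m ∈ s, (1 - C (a m) * X : ℝ[X]).natDegree ≤ ∑ m ∈ s, 1 :=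
      Finset.sum_le_sum fun m _ => hdegfac m
    _ = s.card := by simp
  have hdeg : p.natDegree ≤ n := by
    refine (natDegree_add_le _ _).trans (max_le ?_ ?_)
    · refine (natDegree_sum_le _ _).trans ((Finset.fold_max_le _).mpr ⟨Nat.zero_le _, fun i _ => ?_⟩)
      refine (natDegree_C_mul_le _ _).trans ((hdegprod _).trans ?_)
      simp
    · refine (natDegree_C_mul_le _ _).trans ((hdegprod _).trans (by simp))
  have hevalprod : ∀ (s : Finset (Fin n)) (y : ℝ),
      (∏ m ∈ s, (1 - C (a m) * X : ℝ[X])).eval y = ∏ m ∈ s, (1 - a m * y) := by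
    intro s y; simp [eval_prod]
  have heval : ∀ j, p.eval (x j) = 0 := by
    intro j
    have : p.eval (x j) =
        (∑ i, c i * ∏ m ∈ univ.erase i, (1 - a m * x j)) +
          t * ∏ m, (1 - a m * x j) := by
      simp [hp, eval_finset_sum, hevalprod]
    rw [this]
    have hterm : ∀ i : Fin n, c i * ∏ m ∈ univ.erase i, (1 - a m * x j)
        = (c i / (1 - a i * x j)) * ∏ m, (1 - a m * x j) := by
      intro i
      rw [← Finset.mul_prod_erase univ _ (Finset.mem_univ i), div_mul_eq_mul_div,
        eq_div_iff (hne0 i j)]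
      ring
    rw [Finset.sum_congr rfl fun i _ => hterm i, ← Finset.sum_mul, ← add_mul, h j, zero_mul]
  have hp0 : p = 0 := by
    refine eq_zero_of_natDegree_lt_card_of_eval_eq_zero p hx heval ?_
    simpa using Nat.lt_succ_of_le hdeg
  have hc : ∀ i, c i = 0 := by
    intro i
    have he : p.eval (a i)⁻¹ = 0 := by rw [hp0]; simp
    have h2 : (∏ m, (1 - a m * (a i)⁻¹)) = 0 :=
      Finset.prod_eq_zero (Finset.mem_univ i) (by rw [mul_inv_cancel₀ (ha0 i), sub_self])
    have h3 : ∀ i' : Fin n, i' ≠ i →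
        c i' * ∏ m ∈ univ.erase i', (1 - a m * (a i)⁻¹) = 0 := by
      intro i' hi'
      refine mul_eq_zero_of_right _ (Finset.prod_eq_zero (Finset.mem_erase.2 ⟨hi'.symm, Finset.mem_univ i⟩) (by rw [mul_inv_cancel₀ (ha0 i), sub_self]))
    have h4 : p.eval (a i)⁻¹ = c i * ∏ m ∈ univ.erase i, (1 - a m * (a i)⁻¹) := by
      have : p.eval (a i)⁻¹ =
          (∑ i', c i' * ∏ m ∈ univ.erase i', (1 - a m * (a i)⁻¹)) +
            t * ∏ m, (1 - a m * (a i)⁻¹) := by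
        simp [hp, eval_finset_sum, hevalprod]
      rw [this, h2, mul_zero, add_zero,
        Finset.sum_eq_single i (fun i' _ hi' => h3 i' hi') (by simp)]
    have h5 : (∏ m ∈ univ.erase i, (1 - a m * (a i)⁻¹)) ≠ 0 := by
      refine Finset.prod_ne_zero_iff.2 fun m hm => ?_
      have hmi : a m ≠ a i := fun hh => (Finset.mem_erase.1 hm).1 (ha hh)
      intro hz
      exact hmi ((mul_inv_eq_one₀ (ha0 i)).1 (by linarith))
    have h6 : c i * ∏ m ∈ univ.erase i, (1 - a m * (a i)⁻¹) = 0 := h4 ▸ he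
    rcases mul_eq_zero.1 h6 with hh | hh
    · exact hh
    · exact absurd hh h5
  refine ⟨hc, ?_⟩
  have := h 0
  simpa [hc] using this

lemma ker_gamma {K : ℕ} (hK : 0 < K) (γ : Matrix (Fin (K - 1)) (Fin K) ℝ)
    (M : Matrix (Fin K) (Fin (K - 1)) ℝ) (hγM : γ * M = 1)
    (hγ2 : γ.mulVec (fun _ => 1) = 0) {y : Fin K → ℝ} (hy : γ.mulVec y = 0) :
    ∃ r : ℝ, y = fun _ => r := by
  set f := Matrix.mulVecLin γ with hf
  have hsurj : Function.Surjective f := fun z =>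
    ⟨M.mulVec z, by simp [f, Matrix.mulVec_mulVec, hγM]⟩
  have hker1 : Module.finrank ℝ (LinearMap.ker f) = 1 := by
    have hrk := LinearMap.finrank_range_add_finrank_ker f
    rw [LinearMap.range_eq_top.2 hsurj, finrank_top, Module.finrank_fintype_fun_eq_card,
      Module.finrank_fintype_fun_eq_card, Fintype.card_fin, Fintype.card_fin] at hrk
    omega
  have hone : ((fun _ => 1 : Fin K → ℝ)) ≠ 0 := fun h => by
    simpa using congrFun h ⟨0, hK⟩
  have hle : Submodule.span ℝ {(fun _ => 1 : Fin K → ℝ)} ≤ LinearMap.ker f := by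
    rw [Submodule.span_le, Set.singleton_subset_iff]
    simpa [f, LinearMap.mem_ker] using hγ2
  have heq : Submodule.span ℝ {(fun _ => 1 : Fin K → ℝ)} = LinearMap.ker f :=
    Submodule.eq_of_le_of_finrank_eq hle (by rw [finrank_span_singleton hone, hker1])
  have hmem : y ∈ Submodule.span ℝ {(fun _ => 1 : Fin K → ℝ)} := by
    rw [heq]; simpa [f, LinearMap.mem_ker] using hy
  obtain ⟨r, hr⟩ := Submodule.mem_span_singleton.1 hmem
  exact ⟨r, by funext i; simpa using (congrFun hr i).symm⟩

/-- For the gray radiative transfer limit matrix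
`R_0 = (Δt/Δx) V [[I, ζγ - I], [ζγ - I, I]]`, with `V = diag(v, v)`,
`ζ_{kℓ} = 1/(1 - v_k λ_ℓ) - 1/(1 + v_k λ_ℓ)`, and `γ` satisfying
`γ (1/(1 - V⊗λ)) = I` and `γ 𝟙 = 0`, the kernel of `R_0` is spanned by the all-ones
vector of `ℝ^{2K}`. -/
theorem stmt_9 (K : ℕ) (hK : 0 < K) (lam : Fin (K - 1) → ℝ) (v : Fin K → ℝ)
    (Δt Δx : ℝ) (hΔt : 0 < Δt) (hΔx : 0 < Δx)
    (hlam : StrictMono lam) (hlampos : ∀ ℓ, 0 < lam ℓ)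
    (hv : StrictMono v) (hvpos : ∀ k, 0 < v k)
    (hne : ∀ ℓ k, lam ℓ * v k ≠ 1)
    (γ : Matrix (Fin (K - 1)) (Fin K) ℝ)
    (hγ1 : γ * Matrix.of (fun k ℓ => 1 / (1 - v k * lam ℓ)) = 1)
    (hγ2 : γ.mulVec (fun _ => 1) = 0) :
    LinearMap.ker (Matrix.toLin'
        ((Δt / Δx) • (Matrix.diagonal (Sum.elim v v) *
          Matrix.fromBlocks 1
            (Matrix.of (fun k ℓ => 1 / (1 - v k * lam ℓ) - 1 / (1 + v k * lam ℓ)) * γ - 1)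
            (Matrix.of (fun k ℓ => 1 / (1 - v k * lam ℓ) - 1 / (1 + v k * lam ℓ)) * γ - 1)
            1))) =
      Submodule.span ℝ {fun _ => (1 : ℝ)} := by
  obtain ⟨n, rfl⟩ : ∃ n, K = n + 1 := ⟨K - 1, (Nat.succ_pred_eq_of_pos hK).symm⟩
  have hv0 : ∀ k, v k ≠ 0 := fun k => (hvpos k).ne'
  have hsub : ∀ k ℓ, (1 : ℝ) - v k * lam ℓ ≠ 0 := fun k ℓ h =>
    hne ℓ k (by rw [mul_comm]; linarith [sub_eq_zero.1 h])
  have hadd : ∀ k ℓ, (1 : ℝ) + v k * lam ℓ ≠ 0 := fun k ℓ => by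
    have := mul_pos (hvpos k) (hlampos ℓ); positivity
  have hsq : ∀ k ℓ, (1 : ℝ) - lam ℓ ^ 2 * v k ^ 2 ≠ 0 := by
    intro k ℓ h
    have h1 : ((1 : ℝ) - v k * lam ℓ) * (1 + v k * lam ℓ) = 0 := by linear_combination h
    rcases mul_eq_zero.1 h1 with h' | h'
    · exact hsub k ℓ h'
    · exact hadd k ℓ h'
  have hinjl : Function.Injective (fun ℓ => lam ℓ ^ 2) := fun i j h =>
    hlam.injective ((sq_eq_sq₀ (hlampos i).le (hlampos j).le).1 h)
  have hinjv : Function.Injective (fun k => v k ^ 2) := fun i j h =>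
    hv.injective ((sq_eq_sq₀ (hvpos i).le (hvpos j).le).1 h)
  have haxx : ∀ ℓ k, lam ℓ ^ 2 * v k ^ 2 ≠ 1 := by
    intro ℓ k hEq
    have h1 : (lam ℓ * v k - 1) * (lam ℓ * v k + 1) = 0 := by linear_combination hEq
    rcases mul_eq_zero.1 h1 with h' | h'
    · exact hne ℓ k (by linarith)
    · nlinarith [mul_pos (hlampos ℓ) (hvpos k)]
  set Mm : Matrix (Fin (n + 1)) (Fin (n + 1 - 1)) ℝ :=
    Matrix.of (fun k ℓ => 1 / (1 - v k * lam ℓ)) with hMm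
  set Nn : Matrix (Fin (n + 1)) (Fin (n + 1 - 1)) ℝ :=
    Matrix.of (fun k ℓ => 1 / (1 + v k * lam ℓ)) with hNn
  set Zm : Matrix (Fin (n + 1)) (Fin (n + 1 - 1)) ℝ :=
    Matrix.of (fun k ℓ => 1 / (1 - v k * lam ℓ) - 1 / (1 + v k * lam ℓ)) with hZm
  set A : Matrix (Fin (n + 1)) (Fin (n + 1)) ℝ := Zm * γ - 1 with hA
  have hZMN : Zm = Mm - Nn := by
    ext k ℓ
    simp [hZm, hMm, hNn, Matrix.sub_apply]
  have kerγ : ∀ y : Fin (n + 1) → ℝ, γ.mulVec y = 0 → ∃ r : ℝ, y = fun _ => r :=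
    fun y hy => ker_gamma hK γ Mm hγ1 hγ2 hy
  have hγM : ∀ cc : Fin (n + 1 - 1) → ℝ, γ.mulVec (Mm.mulVec cc) = cc := by
    intro cc
    rw [Matrix.mulVec_mulVec, hγ1, Matrix.one_mulVec]
  -- ζ is injective
  have hZinj : ∀ cc : Fin (n + 1 - 1) → ℝ, Zm.mulVec cc = 0 → cc = 0 := by
    intro cc hcc
    have hkey : ∀ k : Fin (n + 1),
        (∑ ℓ, (2 * lam ℓ * cc ℓ) / (1 - lam ℓ ^ 2 * v k ^ 2)) + 0 = 0 := by
      intro k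
      have h0 := congrFun hcc k
      simp only [Matrix.mulVec, dotProduct, hZm, Matrix.of_apply, Pi.zero_apply] at h0
      have hterm : ∀ ℓ, (1 / (1 - v k * lam ℓ) - 1 / (1 + v k * lam ℓ)) * cc ℓ
          = v k * ((2 * lam ℓ * cc ℓ) / (1 - lam ℓ ^ 2 * v k ^ 2)) := by
        intro ℓ
        have e1 := hsub k ℓ
        have e2 := hadd k ℓ
        have e3 : (1 : ℝ) - lam ℓ ^ 2 * v k ^ 2 ≠ 0 := hsq k ℓ
        have e4 : (1 : ℝ) - v k ^ 2 * lam ℓ ^ 2 ≠ 0 := fun hcon => e3 (by linarith)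
        field_simp [e1, e2, e3, e4]
        ring
      rw [Finset.sum_congr rfl fun ℓ _ => hterm ℓ, ← Finset.mul_sum] at h0
      rcases mul_eq_zero.1 h0 with h' | h'
      · exact absurd h' (hv0 k)
      · rw [h', add_zero]
    obtain ⟨h1, _⟩ := key_frac (fun ℓ => lam ℓ ^ 2) hinjl (fun ℓ => pow_ne_zero 2 (hlampos ℓ).ne')
      (fun k => v k ^ 2) hinjv (fun ℓ k => haxx ℓ k) (fun ℓ => 2 * lam ℓ * cc ℓ) 0 hkey
    funext ℓ
    have h2 : 2 * lam ℓ * cc ℓ = 0 := h1 ℓ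
    have hl : lam ℓ ≠ 0 := (hlampos ℓ).ne'
    simpa [mul_eq_zero, hl] using h2
  -- M + N injectivity
  have hMNinj : ∀ (cc : Fin (n + 1 - 1) → ℝ) (t : ℝ),
      Mm.mulVec cc + Nn.mulVec cc = (fun _ => t) → cc = 0 := by
    intro cc t h
    have hkey : ∀ k : Fin (n + 1),
        (∑ ℓ, (2 * cc ℓ) / (1 - lam ℓ ^ 2 * v k ^ 2)) + (-t) = 0 := by
      intro k
      have h0 := congrFun h k
      simp only [Pi.add_apply, Matrix.mulVec, dotProduct, hMm, hNn,
        Matrix.of_apply] at h0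
      rw [← Finset.sum_add_distrib] at h0
      have hterm : ∀ ℓ, 1 / (1 - v k * lam ℓ) * cc ℓ + 1 / (1 + v k * lam ℓ) * cc ℓ
          = (2 * cc ℓ) / (1 - lam ℓ ^ 2 * v k ^ 2) := by
        intro ℓ
        have e1 := hsub k ℓ
        have e2 := hadd k ℓ
        have e3 : (1 : ℝ) - lam ℓ ^ 2 * v k ^ 2 ≠ 0 := hsq k ℓ
        have e4 : (1 : ℝ) - v k ^ 2 * lam ℓ ^ 2 ≠ 0 := fun hcon => e3 (by linarith)
        field_simp [e1, e2, e3, e4]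
        ring
      rw [Finset.sum_congr rfl fun ℓ _ => hterm ℓ] at h0
      rw [h0, add_neg_cancel]
    obtain ⟨h1, _⟩ := key_frac (fun ℓ => lam ℓ ^ 2) hinjl (fun ℓ => pow_ne_zero 2 (hlampos ℓ).ne')
      (fun k => v k ^ 2) hinjv (fun ℓ k => haxx ℓ k) (fun ℓ => 2 * cc ℓ) (-t) hkey
    funext ℓ
    have h2 : 2 * cc ℓ = 0 := h1 ℓ
    have : cc ℓ = 0 := by linarith
    simpa using this
  have hAy : ∀ y : Fin (n + 1) → ℝ, A.mulVec y = Zm.mulVec (γ.mulVec y) - y := by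
    intro y
    rw [hA, Matrix.sub_mulVec, Matrix.one_mulVec, ← Matrix.mulVec_mulVec]
  have hΔ : Δt / Δx ≠ 0 := (div_pos hΔt hΔx).ne'
  have hconv : ∀ x : (Fin (n + 1) ⊕ Fin (n + 1)) → ℝ,
      (((Δt / Δx) • (Matrix.diagonal (Sum.elim v v) * Matrix.fromBlocks 1 A A 1)).mulVec x = 0)
        ↔ (Matrix.fromBlocks 1 A A 1).mulVec x = 0 := by
    intro x
    rw [Matrix.smul_mulVec, smul_eq_zero]
    simp only [hΔ, false_or]
    rw [← Matrix.mulVec_mulVec]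
    constructor
    · intro h
      funext i
      have h2 := congrFun h i
      rw [Matrix.mulVec_diagonal] at h2
      have hne' : Sum.elim v v i ≠ 0 := by cases i <;> exact hv0 _
      exact (mul_eq_zero.1 h2).resolve_left hne'
    · intro h
      rw [h, Matrix.mulVec_zero]
  ext x
  rw [LinearMap.mem_ker, Matrix.toLin'_apply, Submodule.mem_span_singleton, hconv x]
  constructor
  · intro hx
    set u := x ∘ Sum.inl with hu
    set w := x ∘ Sum.inr with hw
    have hxe : x = Sum.elim u w := (Sum.elim_comp_inl_inr x).symm
    rw [hxe, Matrix.fromBlocks_mulVec] at hx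
    have h1 : (1 : Matrix _ _ ℝ).mulVec u + A.mulVec w = 0 :=
      funext fun k => congrFun hx (Sum.inl k)
    have h2 : A.mulVec u + (1 : Matrix _ _ ℝ).mulVec w = 0 :=
      funext fun k => congrFun hx (Sum.inr k)
    rw [Matrix.one_mulVec] at h1 h2
    -- the sum u + w lies in ker (ζγ)
    have hs : Zm.mulVec (γ.mulVec (u + w)) = 0 := by
      have h3 : A.mulVec (u + w) + (u + w) = 0 := by
        rw [Matrix.mulVec_add]
        calc A.mulVec u + A.mulVec w + (u + w)
            = (u + A.mulVec w) + (A.mulVec u + w) := by abel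
          _ = 0 := by rw [h1, h2, add_zero]
      rw [hAy] at h3
      calc Zm.mulVec (γ.mulVec (u + w))
          = (Zm.mulVec (γ.mulVec (u + w)) - (u + w)) + (u + w) := by abel
        _ = 0 := h3
    obtain ⟨r, hr⟩ := kerγ _ (hZinj _ hs)
    -- the difference u - w is zero
    have hd : (u - w) - A.mulVec (u - w) = 0 := by
      rw [Matrix.mulVec_sub]
      calc u - w - (A.mulVec u - A.mulVec w)
          = (u + A.mulVec w) - (A.mulVec u + w) := by abel
        _ = 0 := by rw [h1, h2, sub_zero]
    set d := u - w with hdd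
    set cc := γ.mulVec d with hcc
    have hZc : Zm.mulVec cc = d + d := by
      rw [hAy, ← hcc] at hd
      have h6 : d = Zm.mulVec cc - d := sub_eq_zero.1 hd
      calc Zm.mulVec cc = (Zm.mulVec cc - d) + d := by abel
        _ = d + d := by rw [← h6]
    have hNcc : γ.mulVec (Nn.mulVec cc) = -cc := by
      have h4 : γ.mulVec (Mm.mulVec cc) - γ.mulVec (Nn.mulVec cc) = cc + cc := by
        rw [← Matrix.mulVec_sub, ← Matrix.sub_mulVec, ← hZMN, hZc, Matrix.mulVec_add, hcc]
      rw [hγM] at h4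
      calc γ.mulVec (Nn.mulVec cc)
          = cc - (cc - γ.mulVec (Nn.mulVec cc)) := by abel
        _ = -cc := by rw [h4]; abel
    have hsum0 : γ.mulVec (Mm.mulVec cc + Nn.mulVec cc) = 0 := by
      rw [Matrix.mulVec_add, hγM, hNcc, add_neg_cancel]
    obtain ⟨t, ht⟩ := kerγ _ hsum0
    have hcc0 : cc = 0 := hMNinj cc t ht
    have hd0 : d = 0 := by
      rw [hcc0, Matrix.mulVec_zero] at hZc
      funext k
      have h7 := congrFun hZc k
      simp only [Pi.add_apply, Pi.zero_apply] at h7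
      have : d k = 0 := by linarith
      simpa using this
    have huw : u = w := sub_eq_zero.1 hd0
    refine ⟨r / 2, ?_⟩
    funext i
    cases i with
    | inl k =>
      have hk : u k + w k = r := congrFun hr k
      have hwu : u k = w k := congrFun huw k
      have : x (Sum.inl k) = r / 2 := by
        have : u k = r / 2 := by linarith
        exact this
      simp [this]
    | inr k =>
      have hk : u k + w k = r := congrFun hr k
      have hwu : u k = w k := congrFun huw k
      have : x (Sum.inr k) = r / 2 := by
        have : w k = r / 2 := by linarith
        exact this
      simp [this]
  · rintro ⟨a, rfl⟩
    have hones : A.mulVec (fun _ => (1 : ℝ)) = fun _ => (-1 : ℝ) := by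
      rw [hAy, hγ2, Matrix.mulVec_zero]
      funext k
      simp
    have hx : (a • (fun _ => (1 : ℝ)) : (Fin (n + 1) ⊕ Fin (n + 1)) → ℝ)
        = Sum.elim (a • fun _ => (1 : ℝ)) (a • fun _ => (1 : ℝ)) := by
      funext i; cases i <;> rfl
    rw [hx, Matrix.fromBlocks_mulVec]
    simp only [Sum.elim_comp_inl, Sum.elim_comp_inr]
    have hP : (1 : Matrix (Fin (n + 1)) (Fin (n + 1)) ℝ).mulVec
          ((a • fun _ => (1 : ℝ)) : Fin (n + 1) → ℝ)
        + A.mulVec ((a • fun _ => (1 : ℝ)) : Fin (n + 1) → ℝ) = 0 := by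
      rw [Matrix.one_mulVec, Matrix.mulVec_smul, hones]
      funext k
      simp
    have hQ : A.mulVec ((a • fun _ => (1 : ℝ)) : Fin (n + 1) → ℝ)
        + (1 : Matrix (Fin (n + 1)) (Fin (n + 1)) ℝ).mulVec
          ((a • fun _ => (1 : ℝ)) : Fin (n + 1) → ℝ) = 0 := by
      rw [Matrix.one_mulVec, Matrix.mulVec_smul, hones]
      funext k
      simp
    rw [hP, hQ]
    funext i
    cases i <;> rfl
end

section
/- For the two-velocity Greenberg-Alt stationary system ∂_x f⁺ = -∂_x f⁻ = (1/(2ε))((1+εφ)f⁻ - (1-εφ)f⁺) on (0, Δx) with boundary data f⁺(0) = f⁺_{in} and f⁻(Δx) = f⁻_{in}, the outgoing values are f⁻(0) = f⁺_{in} + 2εφ(f⁺_{in} - e^{-φΔx} f⁻_{in})/(e^{-φΔx} - 1 - εφ(1+e^{-φΔx})) and f⁺(Δx) = f⁻_{in} - 2εφ(f⁺_{in} - e^{-φΔx} f⁻_{in})/(e^{-φΔx} - 1 - εφ(1+e^{-φΔx})). -/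
/-- Explicit outgoing values for the two-velocity Greenberg–Alt stationary system on
`(0, Δx)` with incoming boundary data `f⁺(0) = f⁺_in`, `f⁻(Δx) = f⁻_in`. -/
theorem stmt_10 (ε Δx φ fpin fmin : ℝ) (hε : 0 < ε) (hΔx : 0 < Δx) (hφ : φ ≠ 0)
    (hD : Real.exp (-φ * Δx) - 1 - ε * φ * (1 + Real.exp (-φ * Δx)) ≠ 0)
    (fp fm : ℝ → ℝ)
    (hfp : ∀ x ∈ Set.Icc 0 Δx,
      HasDerivAt fp ((1 / (2 * ε)) * ((1 + ε * φ) * fm x - (1 - ε * φ) * fp x)) x)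
    (hfm : ∀ x ∈ Set.Icc 0 Δx,
      HasDerivAt fm ((1 / (2 * ε)) * ((1 + ε * φ) * fm x - (1 - ε * φ) * fp x)) x)
    (hbc1 : fp 0 = fpin) (hbc2 : fm Δx = fmin) :
    fm 0 = fpin + 2 * ε * φ * (fpin - Real.exp (-φ * Δx) * fmin) /
        (Real.exp (-φ * Δx) - 1 - ε * φ * (1 + Real.exp (-φ * Δx))) ∧
      fp Δx = fmin - 2 * ε * φ * (fpin - Real.exp (-φ * Δx) * fmin) /
        (Real.exp (-φ * Δx) - 1 - ε * φ * (1 + Real.exp (-φ * Δx))) := by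
  have hε0 : ε ≠ 0 := ne_of_gt hε
  obtain ⟨c, hcdef⟩ : ∃ c, fp 0 - fm 0 = c := ⟨_, rfl⟩
  -- Step A: fp - fm is constant on [0, Δx]
  have hA : ∀ x ∈ Set.Icc (0:ℝ) Δx, fp x - fm x = c := by
    have hconst := constant_of_has_deriv_right_zero
      (f := fun x => fp x - fm x) (a := 0) (b := Δx)
      (fun x hx => ((hfp x hx).sub (hfm x hx)).continuousAt.continuousWithinAt)
      (fun x hx => by
        have h := (hfp x (Set.mem_Icc_of_Ico hx)).sub (hfm x (Set.mem_Icc_of_Ico hx))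
        have h2 := h.hasDerivWithinAt (s := Set.Ici x); rw [sub_self] at h2; exact h2)
    intro x hx
    have := hconst x hx
    rw [this, hcdef]
  -- Step B: integrating factor (scaled by ε*φ to avoid division)
  have hB : ∀ x ∈ Set.Icc (0:ℝ) Δx,
      HasDerivAt (fun x => (ε * φ * (fp x + fm x) - c) * Real.exp (-φ * x)) 0 x := by
    intro x hx
    have hsum := ((hfp x hx).add (hfm x hx)).const_mul (ε * φ)
    have hexp : HasDerivAt (fun x => Real.exp (-φ * x)) (Real.exp (-φ * x) * (-φ)) x := by
      simpa using ((hasDerivAt_id x).const_mul (-φ)).exp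
    have hprod := (hsum.sub_const c).mul hexp
    have hfmx : fm x = fp x - c := by have := hA x hx; linarith
    have hval : (ε * φ * ((1 / (2 * ε)) * ((1 + ε * φ) * fm x - (1 - ε * φ) * fp x) +
        (1 / (2 * ε)) * ((1 + ε * φ) * fm x - (1 - ε * φ) * fp x))) * Real.exp (-φ * x)
        + (ε * φ * (fp x + fm x) - c) * (Real.exp (-φ * x) * (-φ)) = 0 := by
      rw [hfmx]
      field_simp
      ring
    exact hval ▸ hprod
  have hBconst := constant_of_has_deriv_right_zero
    (f := fun x => (ε * φ * (fp x + fm x) - c) * Real.exp (-φ * x)) (a := 0) (b := Δx)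
    (fun x hx => ((hB x hx).continuousAt).continuousWithinAt)
    (fun x hx => (hB x (Set.mem_Icc_of_Ico hx)).hasDerivWithinAt)
  have hrel : (ε * φ * (fp Δx + fm Δx) - c) * Real.exp (-φ * Δx)
      = ε * φ * (fp 0 + fm 0) - c := by
    have := hBconst Δx (Set.right_mem_Icc.mpr hΔx.le)
    simpa using this
  -- translate boundary values
  have hfm0 : fm 0 = fpin - c := by rw [← hbc1]; linarith [hcdef]
  have hfpΔ : fp Δx = fmin + c := by
    have := hA Δx (Set.right_mem_Icc.mpr hΔx.le)
    rw [hbc2] at this; linarith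
  rw [hfpΔ, hbc2, hfm0, hbc1] at hrel
  -- key relation determining c
  have hcval : c * (Real.exp (-φ * Δx) - 1 - ε * φ * (1 + Real.exp (-φ * Δx)))
      = -(2 * ε * φ * (fpin - Real.exp (-φ * Δx) * fmin)) := by
    linear_combination -hrel
  have hdiv : 2 * ε * φ * (fpin - Real.exp (-φ * Δx) * fmin) /
      (Real.exp (-φ * Δx) - 1 - ε * φ * (1 + Real.exp (-φ * Δx))) = -c := by
    rw [div_eq_iff hD]; linear_combination hcval
  constructor
  · rw [hfm0, hdiv]; ring
  · rw [hfpΔ, hdiv]; ring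
end

section
/- Suppose the discrete nonzero eigenvalues λ_ℓ^ε of the chemotaxis kinetic model satisfy 1 = (1/2)Σ_{k=-K}^K ω_k T_ε(v_k)/(T_ε(v_k) - λ^ε v_k) with T_ε(v) = 1 + εφ(v∂_x S), where φ is odd, the quadrature set is symmetric (v_{-k} = -v_k, ω_{-k} = ω_k) with Σ_k ω_k = 1 (sum over k=-K..K counting symmetric pairs appropriately) and Σ ω_k v_k² = 1/3. If λ_0^ε = ελ_0^1 + ε²λ_0^2 + o(ε²) is the branch of eigenvalues with λ_0^ε → 0 and λ_0^1 ≠ 0, then λ_0^1 = 3 Σ_{k=1}^K ω_k v_k φ(v_k ∂_x S). -/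
open Filter Asymptotics

/-- Expansion of the near-zero eigenvalue of the Othmer–Alt chemotaxis model: if
`λ_0^ε = ε λ_0^1 + ε² λ_0^2 + o(ε²)` is a branch of eigenvalues of the relation
`1 = (1/2) ∑_{k=-K}^K ω_k T_ε(v_k)/(T_ε(v_k) - λ^ε v_k)` with `T_ε(v) = 1 + ε φ(v ∂_x S)`,
`φ` odd, a symmetric quadrature normalized by `∑ ω_k = 1` and `∑ ω_k v_k² = 1/3`, and
`λ_0^1 ≠ 0`, then `λ_0^1 = 3 ∑_{k=1}^K ω_k v_k φ(v_k ∂_x S)`. -/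
theorem stmt_19 (K : ℕ) (ω v : Fin K → ℝ) (hω : ∀ k, 0 < ω k) (hvpos : ∀ k, 0 < v k)
    (hsum : ∑ k, ω k = 1) (hsum2 : ∑ k, ω k * v k ^ 2 = 1 / 3)
    (φ : ℝ → ℝ) (hφodd : ∀ u, φ (-u) = -φ u) (S' : ℝ)
    (lam : ℝ → ℝ) (lam1 lam2 : ℝ) (hlam1 : lam1 ≠ 0)
    (hexp : (fun ε => lam ε - (ε * lam1 + ε ^ 2 * lam2)) =o[nhdsWithin 0 (Set.Ioi 0)]
      fun ε => ε ^ 2)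
    (heig : ∀ᶠ ε in nhdsWithin (0 : ℝ) (Set.Ioi 0),
      1 = (1 / 2) * ∑ k, ω k *
        ((1 + ε * φ (v k * S')) / (1 + ε * φ (v k * S') - lam ε * v k) +
          (1 + ε * φ (-v k * S')) / (1 + ε * φ (-v k * S') + lam ε * v k))) :
    lam1 = 3 * ∑ k, ω k * v k * φ (v k * S') := by
  set a : Fin K → ℝ := fun k => φ (v k * S') with ha
  set L := nhdsWithin (0 : ℝ) (Set.Ioi 0) with hL
  have hε0 : Tendsto (fun ε : ℝ => ε) L (nhds 0) :=
    tendsto_id.mono_right nhdsWithin_le_nhds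
  -- g = lam ε / ε tends to lam1
  have h2 := hexp.tendsto_div_nhds_zero
  have hgeq : ∀ᶠ ε in L, lam ε / ε =
      lam1 + ε * lam2 + (lam ε - (ε * lam1 + ε ^ 2 * lam2)) / ε ^ 2 * ε := by
    filter_upwards [self_mem_nhdsWithin] with ε hε
    have hne : (ε : ℝ) ≠ 0 := ne_of_gt hε
    field_simp
    ring
  have hg : Tendsto (fun ε => lam ε / ε) L (nhds lam1) := by
    rw [tendsto_congr' hgeq]
    have h3 : Tendsto
        (fun ε => lam1 + ε * lam2 + (lam ε - (ε * lam1 + ε ^ 2 * lam2)) / ε ^ 2 * ε) L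
        (nhds (lam1 + 0 * lam2 + 0 * 0)) :=
      (tendsto_const_nhds.add (hε0.mul tendsto_const_nhds)).add (h2.mul hε0)
    simpa using h3
  -- lam tends to 0
  have h0 : Tendsto lam L (nhds 0) := by
    have : Tendsto (fun ε => lam ε / ε * ε) L (nhds (lam1 * 0)) := hg.mul hε0
    rw [tendsto_congr' ?_] ; exact (by simpa using this)
    filter_upwards [self_mem_nhdsWithin] with ε hε
    field_simp [ne_of_gt (show (0:ℝ) < ε from hε)]
  -- eventually lam ε ≠ 0
  have hlamne : ∀ᶠ ε in L, lam ε ≠ 0 := by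
    filter_upwards [hg.eventually_ne hlam1, self_mem_nhdsWithin] with ε h1 h2
    intro hc
    exact h1 (by simp [hc])
  -- denominators tend to 1
  have hD1 : ∀ k : Fin K, Tendsto (fun ε => 1 + ε * a k - lam ε * v k) L (nhds 1) := by
    intro k
    have : Tendsto (fun ε => 1 + ε * a k - lam ε * v k) L
        (nhds (1 + 0 * a k - 0 * v k)) :=
      (tendsto_const_nhds.add (hε0.mul tendsto_const_nhds)).sub (h0.mul tendsto_const_nhds)
    simpa using this
  have hD2 : ∀ k : Fin K, Tendsto (fun ε => 1 - ε * a k + lam ε * v k) L (nhds 1) := by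
    intro k
    have : Tendsto (fun ε => 1 - ε * a k + lam ε * v k) L
        (nhds (1 - 0 * a k + 0 * v k)) :=
      (tendsto_const_nhds.sub (hε0.mul tendsto_const_nhds)).add (h0.mul tendsto_const_nhds)
    simpa using this
  have hD1ne : ∀ᶠ ε in L, ∀ k : Fin K, 1 + ε * a k - lam ε * v k ≠ 0 :=
    eventually_all.2 fun k => (hD1 k).eventually_ne one_ne_zero
  have hD2ne : ∀ᶠ ε in L, ∀ k : Fin K, 1 - ε * a k + lam ε * v k ≠ 0 :=
    eventually_all.2 fun k => (hD2 k).eventually_ne one_ne_zero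
  -- The key function F
  set F : ℝ → ℝ := fun ε => ∑ k, ω k * v k * (lam ε / ε * v k - a k) /
      ((1 + ε * a k - lam ε * v k) * (1 - ε * a k + lam ε * v k)) with hF
  -- F is eventually 0
  have hF0 : ∀ᶠ ε in L, F ε = 0 := by
    filter_upwards [heig, hlamne, hD1ne, hD2ne, self_mem_nhdsWithin] with ε heq hlne hd1 hd2 hεpos
    have hεne : (ε : ℝ) ≠ 0 := ne_of_gt hεpos
    -- rewrite heq using oddness of φ
    have hsc : (∑ k, ω k *
        ((1 + ε * φ (v k * S')) / (1 + ε * φ (v k * S') - lam ε * v k) +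
          (1 + ε * φ (-v k * S')) / (1 + ε * φ (-v k * S') + lam ε * v k))) =
        ∑ k, ω k * ((1 + ε * a k) / (1 + ε * a k - lam ε * v k) +
          (1 - ε * a k) / (1 - ε * a k + lam ε * v k)) := by
      apply Finset.sum_congr rfl
      intro k _
      have hodd : φ (-v k * S') = -a k := by rw [neg_mul, hφodd]
      rw [hodd]
      simp only [ha]
      ring_nf
    have heq' : 1 = (1 / 2) * ∑ k, ω k *
        ((1 + ε * a k) / (1 + ε * a k - lam ε * v k) +
          (1 - ε * a k) / (1 - ε * a k + lam ε * v k)) := by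
      rw [← hsc]; exact heq
    -- per-term identity
    have hterm : ∀ k : Fin K, ω k *
        ((1 + ε * a k) / (1 + ε * a k - lam ε * v k) +
          (1 - ε * a k) / (1 - ε * a k + lam ε * v k)) =
        2 * ω k + 2 * (lam ε * ε) * (ω k * v k * (lam ε / ε * v k - a k) /
          ((1 + ε * a k - lam ε * v k) * (1 - ε * a k + lam ε * v k))) := by
      intro k
      have h1 := hd1 k
      have h2 := hd2 k
      field_simp
      ring
    have hsumeq : (∑ k, ω k *
        ((1 + ε * a k) / (1 + ε * a k - lam ε * v k) +
          (1 - ε * a k) / (1 - ε * a k + lam ε * v k))) =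
        2 + 2 * (lam ε * ε) * F ε := by
      rw [Finset.sum_congr rfl fun k _ => hterm k, Finset.sum_add_distrib,
        ← Finset.mul_sum, ← Finset.mul_sum, hsum, hF]
      ring
    rw [hsumeq] at heq'
    have : lam ε * ε * F ε = 0 := by linarith
    exact (mul_eq_zero.1 this).resolve_left (mul_ne_zero hlne hεne)
  -- F tends to lam1 / 3 - ∑ ω v a
  have hFt : Tendsto F L (nhds (∑ k, ω k * v k * (lam1 * v k - a k))) := by
    apply tendsto_finset_sum
    intro k _
    have hnum : Tendsto (fun ε => ω k * v k * (lam ε / ε * v k - a k)) L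
        (nhds (ω k * v k * (lam1 * v k - a k))) :=
      tendsto_const_nhds.mul ((hg.mul tendsto_const_nhds).sub tendsto_const_nhds)
    have hden : Tendsto (fun ε => (1 + ε * a k - lam ε * v k) * (1 - ε * a k + lam ε * v k)) L
        (nhds (1 * 1)) := (hD1 k).mul (hD2 k)
    have := hnum.div hden (by norm_num)
    simp only [mul_one, div_one] at this
    exact this
  have hFt0 : Tendsto F L (nhds 0) :=
    Tendsto.congr' (hF0.mono fun ε h => h.symm) tendsto_const_nhds
  have hlim : (∑ k, ω k * v k * (lam1 * v k - a k)) = 0 :=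
    tendsto_nhds_unique hFt hFt0
  have e1 : ∑ k, ω k * v k * (lam1 * v k - a k) =
      lam1 * (∑ k, ω k * v k ^ 2) - ∑ k, ω k * v k * a k := by
    rw [Finset.mul_sum, ← Finset.sum_sub_distrib]
    apply Finset.sum_congr rfl
    intro k _
    ring
  rw [e1, hsum2] at hlim
  linarith
end
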